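/- Let d ≥ 3 and let W be the d×d matrix over the Laurent polynomial ring Z[x^{±1}, q_1^{±1},...,q_d^{±1}] with entries W_{i,j} = (∏_{s=i}^{j-1} q_s) x^{j-i-1} for i < j, W_{i,i} = 0, and W_{i,j} = (∏_{s=i}^{d} q_s)(∏_{s=1}^{j-1} q_s) x^{d-(i-j)-1} for i > j. Then det W = (-1)^{d-1} ε ∑_{j=0}^{d-2} (ε x^d)^j, where ε = ∏_{i=1}^d q_i. -/

import Mathlib

/-- The Laurent polynomial ring `ℤ[x^{±1}, q_1^{±1}, …, q_d^{±1}]`, realized as the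
monoid algebra of `ℤ`-valued exponent vectors; the variable `none` is `x` and
`some s` is `q_s`. -/
noncomputable def LaurentVar (d : ℕ) (s : Option (Fin d)) :
    AddMonoidAlgebra ℤ (Option (Fin d) →₀ ℤ) :=
  AddMonoidAlgebra.single (Finsupp.single s 1) 1

lemma laurentVar_isUnit (d : ℕ) (s : Option (Fin d)) : IsUnit (LaurentVar d s) := by
  have h1 : LaurentVar d s * AddMonoidAlgebra.single (-(Finsupp.single s 1)) (1:ℤ) = 1 := by
    rw [LaurentVar, AddMonoidAlgebra.single_mul_single, add_neg_cancel, mul_one,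
      AddMonoidAlgebra.one_def]
  have h2 : AddMonoidAlgebra.single (-(Finsupp.single s 1)) (1:ℤ) * LaurentVar d s = 1 := by
    rw [LaurentVar, AddMonoidAlgebra.single_mul_single, neg_add_cancel, mul_one,
      AddMonoidAlgebra.one_def]
  exact ⟨⟨_, _, h1, h2⟩, rfl⟩

open scoped Fin.NatCast Fin.CommRing

/-- **Determinant of the weight matrix of an undissected edge-weighted `d`-gon.**
Let `d ≥ 3` and let `W` be the `d×d` matrix over the Laurent polynomial ring
`ℤ[x^{±1}, q_1^{±1}, …, q_d^{±1}]` whose `(i,j)` entry, for `i ≠ j`, is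
`(∏_{s} q_s) * x^(k-1)` where the product runs over the `k = (j - i) mod d` edges
`e_i, e_{i+1}, …, e_{j-1}` (indices mod `d`) traversed counterclockwise from `i` to
`j`, and whose diagonal entries are `0`; this unifies the three cases
`W i j = (∏_{s=i}^{j-1} q_s) x^(j-i-1)` for `i < j`, `W i i = 0` and
`W i j = (∏_{s=i}^{d} q_s)(∏_{s=1}^{j-1} q_s) x^(d-(i-j)-1)` for `i > j`.
Then `det W = (-1)^(d-1) * ε * ∑_{j=0}^{d-2} (ε x^d)^j` where `ε = ∏_{i=1}^d q_i`. -/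
theorem polygon_weight_matrix_det (d : ℕ) (hd : 3 ≤ d) [NeZero d]
    (x : AddMonoidAlgebra ℤ (Option (Fin d) →₀ ℤ))
    (q : Fin d → AddMonoidAlgebra ℤ (Option (Fin d) →₀ ℤ))
    (hx : x = LaurentVar d none) (hq : ∀ s, q s = LaurentVar d (some s))
    (W : Matrix (Fin d) (Fin d) (AddMonoidAlgebra ℤ (Option (Fin d) →₀ ℤ)))
    (hW : ∀ i j : Fin d, W i j =
      if i = j then 0
      else (∏ t : Fin ((j - i).val), q (i + Fin.ofNat d (t : ℕ))) * x ^ ((j - i).val - 1)) :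
    W.det = (-1) ^ (d - 1) * (∏ s : Fin d, q s) *
      ∑ j ∈ Finset.range (d - 1), ((∏ s : Fin d, q s) * x ^ d) ^ j := by
  simp only [Fin.ofNat_eq_cast] at hW
  obtain ⟨n, rfl⟩ : ∃ n, d = n + 1 := ⟨d - 1, (Nat.succ_pred_eq_of_pos (by omega)).symm⟩
  have hn : 2 ≤ n := by omega
  -- units
  have hxu : IsUnit x := hx ▸ laurentVar_isUnit _ _
  have hqu : ∀ s, IsUnit (q s) := fun s => (hq s) ▸ laurentVar_isUnit _ _
  set E := ∏ s, q s with hE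
  set b := E * x ^ n with hb
  have hEu : IsUnit E := by
    rw [hE]
    exact Finset.prod_induction q IsUnit (fun _ _ => IsUnit.mul) isUnit_one fun s _ => hqu s
  have hbu : IsUnit b := hEu.mul (hxu.pow n)
  obtain ⟨U, hU⟩ := hbu
  set γ := (↑U⁻¹ : AddMonoidAlgebra ℤ (Option (Fin (n+1)) →₀ ℤ)) with hγ
  have hbγ : b * γ = 1 := by rw [← hU, hγ]; exact_mod_cast U.mul_inv
  -- product lemmas
  have prod_succ_left : ∀ (c : Fin (n+1)) (m : ℕ),
      (∏ t : Fin (m+1), q (c + ((t : ℕ) : Fin (n+1)))) =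
        q c * ∏ t : Fin m, q ((c + 1) + ((t : ℕ) : Fin (n+1))) := by
    intro c m
    rw [Fin.prod_univ_succ]
    congr 1
    · norm_num
    · refine Finset.prod_congr rfl fun t _ => ?_
      congr 1
      have : ((t.succ : ℕ) : Fin (n+1)) = ((t : ℕ) : Fin (n+1)) + 1 := by
        rw [Fin.val_succ]; push_cast; ring
      rw [this]; ring
  have prod_rot : ∀ c : Fin (n+1),
      (∏ t : Fin (n+1), q (c + ((t : ℕ) : Fin (n+1)))) = E := by
    intro c
    rw [hE]
    calc (∏ t : Fin (n+1), q (c + ((t : ℕ) : Fin (n+1))))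
        = ∏ t : Fin (n+1), q (c + t) := by
          refine Finset.prod_congr rfl fun t _ => ?_
          rw [Fin.cast_val_eq_self]
      _ = ∏ s, q s := Equiv.prod_comp (Equiv.addLeft c) q
  have prod_concat : ∀ (c : Fin (n+1)) (a b' : ℕ),
      (∏ t : Fin a, q (c + ((t : ℕ) : Fin (n+1)))) *
        (∏ t : Fin b', q ((c + (a : Fin (n+1))) + ((t : ℕ) : Fin (n+1)))) =
        ∏ t : Fin (a + b'), q (c + ((t : ℕ) : Fin (n+1))) := by
    intro c a b'
    rw [Fin.prod_univ_add (f := fun t : Fin (a+b') => q (c + ((t : ℕ) : Fin (n+1))))]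
    congr 1
    refine Finset.prod_congr rfl fun t _ => ?_
    congr 1
    show c + (a : Fin (n+1)) + ((t : ℕ) : Fin (n+1)) = c + (((a + (t:ℕ) : ℕ)) : Fin (n+1))
    push_cast
    ring
  have succ_val : ∀ i : Fin (n+1), (i : ℕ) < n → ((i + 1 : Fin (n+1)) : ℕ) = (i : ℕ) + 1 := by
    intro i hi
    have : i ≠ Fin.last n := by
      intro h; rw [h] at hi; simp at hi
    simpa using (Fin.val_add_one_of_lt (Fin.lt_last_iff_ne_last.mpr this))
  have succ_ne : ∀ i : Fin (n+1), (i : ℕ) < n → i + 1 ≠ i := by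
    intro i hi h
    have := succ_val i hi
    rw [h] at this; omega
  -- the row-reduction matrix A
  set A : Matrix (Fin (n+1)) (Fin (n+1)) (AddMonoidAlgebra ℤ (Option (Fin (n+1)) →₀ ℤ)) :=
    Matrix.of fun i k =>
      (if k = i then 1 else 0) +
        (if (i : ℕ) < n then (if k = i + 1 then -(q i * x) else 0) else 0) with hA
  have hAW : ∀ i j, (A * W) i j =
      W i j + (if (i : ℕ) < n then -(q i * x) * W (i+1) j else 0) := by
    intro i j
    rw [Matrix.mul_apply]
    by_cases hi : (i : ℕ) < n <;>
      simp [hA, hi, add_mul, ite_mul, Finset.sum_add_distrib, Finset.sum_ite_eq']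
  set M : Matrix (Fin (n+1)) (Fin (n+1)) (AddMonoidAlgebra ℤ (Option (Fin (n+1)) →₀ ℤ)) :=
    Matrix.of fun i j =>
      if (i : ℕ) < n then
        (if j = i then -b else if j = i + 1 then q i else 0)
      else W i j with hM
  have hAWM : A * W = M := by
    apply Matrix.ext
    intro i j
    rw [hAW]
    by_cases hi : (i : ℕ) < n
    · simp only [hM, Matrix.of_apply, hi, if_true]
      have hii : ((i + 1 : Fin (n+1)) : ℕ) = (i : ℕ) + 1 := succ_val i hi
      by_cases hji : j = i
      · subst hji
        rw [if_pos rfl]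
        have hWjj : W j j = 0 := by rw [hW, if_pos rfl]
        have h4 : ((j - (j + 1) : Fin (n+1)) : ℕ) = n := by
          have h3 : j - (j + 1) = (0 : Fin (n+1)) - 1 := by ring
          rw [h3, Fin.coe_sub_one, if_pos rfl]
        have hWj1 : W (j+1) j =
            (∏ t : Fin n, q ((j + 1) + ((t : ℕ) : Fin (n+1)))) * x ^ (n - 1) := by
          rw [hW, if_neg (succ_ne j hi), h4]
        rw [hWjj, hWj1, zero_add]
        have h5 : q j * (∏ t : Fin n, q ((j + 1) + ((t : ℕ) : Fin (n+1)))) = E := by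
          rw [← prod_succ_left j n, prod_rot]
        have hx1 : x * x ^ (n-1) = x ^ n := by
          rw [← pow_succ']; congr 1; omega
        calc -(q j * x) * ((∏ t : Fin n, q ((j + 1) + ((t : ℕ) : Fin (n+1)))) * x ^ (n-1))
            = -((q j * ∏ t : Fin n, q ((j + 1) + ((t : ℕ) : Fin (n+1)))) * (x * x ^ (n-1))) := by
              ring
          _ = -b := by rw [h5, hx1, hb]
      · rw [if_neg hji]
        have hne' : ¬ (i = i + 1) := fun h => succ_ne i hi h.symm
        by_cases hji1 : j = i + 1
        · subst hji1
          rw [if_pos rfl]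
          have hW11 : W (i+1) (i+1) = 0 := by rw [hW, if_pos rfl]
          have h1 : ((i + 1 - i : Fin (n+1)) : ℕ) = 1 := by
            have e1 : (i + 1 - i : Fin (n+1)) = 1 := by ring
            rw [e1, Fin.val_one']
            exact Nat.mod_eq_of_lt (by omega)
          have hWi1 : W i (i+1) = q i := by
            rw [hW, if_neg hne', h1]
            simp
          rw [hW11, hWi1, mul_zero, add_zero]
        · rw [if_neg hji1]
          have hk0 : j - i ≠ 0 := sub_ne_zero_of_ne hji
          have hk1 : ((j - i : Fin (n+1)) : ℕ) ≠ 1 := by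
            intro h
            apply hji1
            have e2 : j - i = 1 := by
              apply Fin.ext; rw [h, Fin.val_one']
              exact (Nat.mod_eq_of_lt (by omega)).symm
            have := congrArg (· + i) e2
            simpa [sub_add_cancel, add_comm] using this
          obtain ⟨m, hm⟩ : ∃ m, ((j - i : Fin (n+1)) : ℕ) = m + 2 := by
            refine ⟨(j - i : Fin (n+1)).val - 2, ?_⟩
            have : ((j - i : Fin (n+1)) : ℕ) ≠ 0 := fun h => hk0 (Fin.ext (by simp [h]))
            omega
          have h5 : ((j - (i + 1) : Fin (n+1)) : ℕ) = m + 1 := by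
            have h6 : j - (i + 1) = (j - i) - 1 := by ring
            rw [h6, Fin.coe_sub_one, if_neg hk0, hm]
            omega
          have hWij : W i j =
              (∏ t : Fin (m+2), q (i + ((t : ℕ) : Fin (n+1)))) * x ^ (m+1) := by
            rw [hW, if_neg (fun h => hji h.symm), hm]
            norm_num
          have hWi1j : W (i+1) j =
              (∏ t : Fin (m+1), q ((i+1) + ((t : ℕ) : Fin (n+1)))) * x ^ m := by
            rw [hW, if_neg (fun h => hji1 h.symm), h5]
            norm_num
          rw [hWij, hWi1j, prod_succ_left i (m+1)]
          ring
    · simp [hM, Matrix.of_apply, hi]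
  have hdetA : A.det = 1 := by
    have htri : A.BlockTriangular id := by
      intro i j hji
      simp only [id] at hji
      have h1 : j ≠ i := ne_of_lt hji
      simp only [hA, Matrix.of_apply, if_neg h1]
      by_cases hi : (i : ℕ) < n
      · have h2 : j ≠ i + 1 := by
          intro h
          have := succ_val i hi
          rw [← h] at this
          have := Fin.lt_iff_val_lt_val.mp hji
          omega
        simp [hi, h2]
      · simp [hi]
    rw [Matrix.det_of_upperTriangular htri]
    have : ∀ i : Fin (n+1), A i i = 1 := by
      intro i
      simp only [hA, Matrix.of_apply, if_pos rfl]
      by_cases hi : (i : ℕ) < n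
      · have h2 : ¬ (i = i + 1) := fun h => succ_ne i hi h.symm
        simp [hi, h2]
      · simp [hi]
    simp [this]
  have hdetWM : W.det = M.det := by
    rw [← hAWM, Matrix.det_mul, hdetA, one_mul]
  -- column reduction T
  set T : Matrix (Fin (n+1)) (Fin (n+1)) (AddMonoidAlgebra ℤ (Option (Fin (n+1)) →₀ ℤ)) :=
    Matrix.of fun i j =>
      if (i : ℕ) ≤ (j : ℕ) then
        (∏ t : Fin ((j : ℕ) - (i : ℕ)), q (i + ((t : ℕ) : Fin (n+1)))) * γ ^ ((j:ℕ) - (i:ℕ))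
      else 0 with hT
  have hdetT : T.det = 1 := by
    have htri : T.BlockTriangular id := by
      intro i j hji
      simp only [id] at hji
      have : ¬ ((i:ℕ) ≤ (j:ℕ)) := not_le.mpr (Fin.lt_iff_val_lt_val.mp hji)
      simp only [hT, Matrix.of_apply, if_neg this]
    rw [Matrix.det_of_upperTriangular htri]
    have : ∀ i : Fin (n+1), T i i = 1 := by
      intro i
      rw [hT]
      simp only [Matrix.of_apply, le_refl, if_true]
      rw [Nat.sub_self]
      simp
    simp [this]
  have hMT : ∀ i j, (M * T) i j =
      if (i : ℕ) < n then -b * T i j + q i * T (i+1) j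
      else ∑ k, W i k * T k j := by
    intro i j
    rw [Matrix.mul_apply]
    by_cases hi : (i : ℕ) < n
    · have hne : i + 1 ≠ i := succ_ne i hi
      simp only [hM, Matrix.of_apply, hi, if_true]
      rw [Finset.sum_eq_add_of_mem i (i+1) (Finset.mem_univ _) (Finset.mem_univ _) hne.symm ?_]
      · simp [hne]
      · intro k _ hk
        simp [hk.1, hk.2]
    · simp [hM, hi]
  have hNtri : (M * T).BlockTriangular OrderDual.toDual := by
    intro i j hji
    have hij : i < j := hji
    have hij' : (i : ℕ) < (j : ℕ) := Fin.lt_iff_val_lt_val.mp hij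
    have hi : (i : ℕ) < n := by have := j.isLt; omega
    rw [hMT, if_pos hi]
    obtain ⟨m, hm⟩ : ∃ m, (j : ℕ) - (i : ℕ) = m + 1 := ⟨(j:ℕ) - (i:ℕ) - 1, by omega⟩
    have hii : ((i + 1 : Fin (n+1)) : ℕ) = (i : ℕ) + 1 := succ_val i hi
    have hm2 : (j : ℕ) - ((i + 1 : Fin (n+1)) : ℕ) = m := by omega
    have hle1 : (i : ℕ) ≤ (j : ℕ) := le_of_lt hij'
    have hle2 : ((i + 1 : Fin (n+1)) : ℕ) ≤ (j : ℕ) := by omega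
    simp only [hT, Matrix.of_apply, if_pos hle1, if_pos hle2]
    rw [hm, hm2, prod_succ_left i m]
    linear_combination (-(q i * (∏ t : Fin m, q ((i + 1) + ((t : ℕ) : Fin (n+1)))) * γ ^ m)) * hbγ
  have hdiag : ∀ i : Fin (n+1), (i:ℕ) < n → (M * T) i i = -b := by
    intro i hi
    rw [hMT, if_pos hi]
    have hii : ((i + 1 : Fin (n+1)) : ℕ) = (i : ℕ) + 1 := succ_val i hi
    have h1 : T i i = 1 := by
      rw [hT]
      simp only [Matrix.of_apply, le_refl, if_true]
      rw [Nat.sub_self]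
      simp
    have h2 : T (i+1) i = 0 := by
      have : ¬ (((i + 1 : Fin (n+1)) : ℕ) ≤ (i : ℕ)) := by omega
      simp only [hT, Matrix.of_apply, if_neg this]
    rw [h1, h2, mul_one, mul_zero, add_zero]
  have hlast : (M * T) (Fin.last n) (Fin.last n) =
      ∑ k, W (Fin.last n) k * T k (Fin.last n) := by
    rw [hMT]
    first
    | rfl
    | rw [if_neg (by simp : ¬ (((Fin.last n : Fin (n+1)) : ℕ) < n))]
  have hdetN : (M * T).det = (-b) ^ n * ∑ k, W (Fin.last n) k * T k (Fin.last n) := by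
    have hprod : (∏ i : Fin n, (M * T) i.castSucc i.castSucc) = (-b) ^ n :=
      calc (∏ i : Fin n, (M * T) i.castSucc i.castSucc) = ∏ _i : Fin n, -b :=
            Finset.prod_congr rfl fun i _ => hdiag i.castSucc (by simp [i.isLt])
        _ = (-b) ^ n := by rw [Finset.prod_const, Finset.card_univ, Fintype.card_fin]
    rw [Matrix.det_of_lowerTriangular _ hNtri, Fin.prod_univ_castSucc, hprod, hlast]
  have hdetWN : W.det = (M * T).det := by
    rw [hdetWM, Matrix.det_mul, hdetT, mul_one]
  -- final computation
  have hlastm1 : (Fin.last n : Fin (n+1)) = -1 := by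
    apply Fin.ext
    rw [Fin.coe_neg_one]
    rfl
  have hterm : ∀ k : Fin n,
      W (Fin.last n) k.castSucc * T k.castSucc (Fin.last n) =
        E * x ^ (k : ℕ) * γ ^ (n - (k : ℕ)) := by
    intro k
    have hne : Fin.last n ≠ k.castSucc := by
      intro h
      have := congrArg Fin.val h
      simp at this
      omega
    have hsub : ((k.castSucc - Fin.last n : Fin (n+1)) : ℕ) = (k : ℕ) + 1 := by
      have h1 : k.castSucc - Fin.last n = k.castSucc + 1 := by rw [hlastm1]; ring
      rw [h1, Fin.coeSucc_eq_succ, Fin.val_succ]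
    have hWlk : W (Fin.last n) k.castSucc =
        (∏ t : Fin ((k:ℕ)+1), q (Fin.last n + ((t : ℕ) : Fin (n+1)))) * x ^ (k:ℕ) := by
      rw [hW, if_neg hne, hsub]
      norm_num
    have hle : ((k.castSucc : Fin (n+1)) : ℕ) ≤ ((Fin.last n : Fin (n+1)) : ℕ) := by
      simp only [Fin.coe_castSucc, Fin.val_last]
      omega
    have h3 : ((Fin.last n : Fin (n+1)) : ℕ) - ((k.castSucc : Fin (n+1)) : ℕ) = n - (k:ℕ) := by
      simp
    have hTkl : T k.castSucc (Fin.last n) =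
        (∏ t : Fin (n - (k:ℕ)), q (k.castSucc + ((t : ℕ) : Fin (n+1)))) * γ ^ (n - (k:ℕ)) := by
      simp only [hT, Matrix.of_apply, if_pos hle]
      rw [h3]
    have hcomb : (∏ t : Fin ((k:ℕ)+1), q (Fin.last n + ((t : ℕ) : Fin (n+1)))) *
        (∏ t : Fin (n - (k:ℕ)), q (k.castSucc + ((t : ℕ) : Fin (n+1)))) = E := by
      have hc : k.castSucc = Fin.last n + (((k:ℕ)+1 : ℕ) : Fin (n+1)) := by
        rw [hlastm1]
        push_cast
        rw [add_comm k.castSucc 1, neg_add_cancel_left]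
      rw [hc, prod_concat]
      have h7 : ((k:ℕ) + 1 + (n - (k:ℕ))) = n + 1 := by omega
      rw [h7, prod_rot]
    rw [hWlk, hTkl]
    calc (∏ t : Fin ((k:ℕ)+1), q (Fin.last n + ((t : ℕ) : Fin (n+1)))) * x ^ (k:ℕ) *
          ((∏ t : Fin (n - (k:ℕ)), q (k.castSucc + ((t : ℕ) : Fin (n+1)))) * γ ^ (n - (k:ℕ)))
        = ((∏ t : Fin ((k:ℕ)+1), q (Fin.last n + ((t : ℕ) : Fin (n+1)))) *
            (∏ t : Fin (n - (k:ℕ)), q (k.castSucc + ((t : ℕ) : Fin (n+1))))) *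
            x ^ (k:ℕ) * γ ^ (n - (k:ℕ)) := by ring
      _ = E * x ^ (k:ℕ) * γ ^ (n - (k:ℕ)) := by rw [hcomb]
  have hfactor : ∀ k : ℕ, k ≤ n →
      (-b) ^ n * (E * x ^ k * γ ^ (n - k)) = (-1) ^ n * E * ((E * x ^ (n+1)) ^ k) := by
    intro k hk
    have h1 : b ^ (n-k) * γ ^ (n-k) = 1 := by rw [← mul_pow, hbγ, one_pow]
    have h2 : b ^ n = b ^ k * b ^ (n-k) := by
      rw [← pow_add]; congr 1; omega
    have h3 : b * x = E * x ^ (n+1) := by rw [hb, pow_succ]; ring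
    calc (-b) ^ n * (E * x ^ k * γ ^ (n - k))
        = (-1) ^ n * E * ((b * x) ^ k) * (b ^ (n-k) * γ ^ (n-k)) := by
          rw [neg_pow, h2, mul_pow]; ring
      _ = (-1) ^ n * E * ((E * x ^ (n+1)) ^ k) := by rw [h1, h3, mul_one]
  rw [hdetWN, hdetN, Fin.sum_univ_castSucc]
  have hWll : W (Fin.last n) (Fin.last n) = 0 := by rw [hW, if_pos rfl]
  rw [hWll, zero_mul, add_zero, Finset.mul_sum]
  have hconv : ∀ k : Fin n, (-b) ^ n * (W (Fin.last n) k.castSucc * T k.castSucc (Fin.last n)) =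
      (-1) ^ n * E * ((E * x ^ (n+1)) ^ (k:ℕ)) := by
    intro k
    rw [hterm k, hfactor (k:ℕ) (by omega)]
  rw [Finset.sum_congr rfl fun k _ => hconv k]
  have hd1 : (n + 1 - 1) = n := by omega
  rw [hd1, Finset.mul_sum]
  exact Fin.sum_univ_eq_sum_range (fun j => (-1) ^ n * E * ((E * x ^ (n+1)) ^ j)) n
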